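/- arXiv:2210.05266 — 3 statements merged into one kernel-verified Lean document; each statement's English description precedes it below -/
import Mathlib

section
/- Let A be a commutative ℂ-algebra, φ : A → ℂ a linear functional, R : A → A a ℂ-linear derivation which is locally nilpotent (for every a ∈ A there exists N with R^N a = 0), F ∈ A, and r ∈ ℂ with r ≠ 0 and R(F) = r·1. Let (L_j)_{j ≥ −1} be linear endomorphisms of A such that: (i) L_j(F·a) = F·L_j(a) for all a ∈ A and all j ≥ −1; (ii) φ(F·a) = 0 for all a ∈ A; (iii) there exists N such that φ(L_k(a)) = 0 for all k > N and all a ∈ A. Define L_wt0(a) = ∑_{j ≥ −1} ((−1)^j/(j+1)!)·L_j(R^{j+1}(a)), a finite sum by local nilpotence. Then φ(L_wt0(a)) = 0 for all a ∈ A if and only if φ(L_k(a)) = 0 for all k ≥ −1 and all a ∈ A. -/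
/-- Proposition 2.16, abstract form: for a commutative ℂ-algebra `A`,
a linear functional `φ`, a locally nilpotent derivation `R`, `F ∈ A` with `R F = r·1`
(`r ≠ 0`), and operators `(L_j)_{j ≥ -1}` satisfying (i) `L_j(F·a) = F·L_j(a)`,
(ii) `φ(F·a) = 0`, (iii) `φ ∘ L_k = 0` for `k` large, the weight-zero constraints
`φ(L_wt0 a) = 0` hold for all `a` iff `φ(L_k a) = 0` for all `k ≥ -1` and all `a`. -/
theorem weight_zero_virasoro_iff_normalized_virasoro
    (A : Type*) [CommRing A] [Algebra ℂ A]
    (φ : A →ₗ[ℂ] ℂ)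
    (R : Derivation ℂ A A)
    (hR : ∀ a : A, ∃ N : ℕ, (R.toLinearMap ^ N) a = 0)
    (F : A) (r : ℂ) (hr : r ≠ 0) (hRF : R F = r • (1 : A))
    (L : ℤ → (A →ₗ[ℂ] A))
    (hLF : ∀ j : ℤ, -1 ≤ j → ∀ a : A, L j (F * a) = F * L j a)
    (hφF : ∀ a : A, φ (F * a) = 0)
    (hvan : ∃ N : ℤ, ∀ k : ℤ, N < k → ∀ a : A, φ (L k a) = 0)
    (Lwt0 : A → A)
    (hLwt0 : ∀ a : A,
      Lwt0 a = ∑ᶠ n : ℕ, ((-1 : ℂ) ^ (n + 1) / (n.factorial : ℂ)) •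
        (L ((n : ℤ) - 1)) ((R.toLinearMap ^ n) a)) :
    (∀ a : A, φ (Lwt0 a) = 0) ↔ (∀ k : ℤ, -1 ≤ k → ∀ a : A, φ (L k a) = 0) := by
  obtain ⟨N, hN⟩ := hvan
  set Rl : A →ₗ[ℂ] A := R.toLinearMap with hRldef
  -- stability of powers
  have hstab : ∀ a : A, ∃ M : ℕ, ∀ n, M ≤ n → (Rl ^ n) a = 0 := by
    intro a
    obtain ⟨N0, hN0⟩ := hR a
    refine ⟨N0, fun n hn => ?_⟩
    have h1 : (Rl ^ n) a = (Rl ^ (n - N0)) ((Rl ^ N0) a) := by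
      rw [← Module.End.mul_apply, ← pow_add, Nat.sub_add_cancel hn]
    rw [h1, hN0, map_zero]
  -- iterated Leibniz
  have hbase : ∀ a : A, Rl (F * a) = F * Rl a + r • a := by
    intro a
    show R (F * a) = F * R a + r • a
    rw [Derivation.leibniz, hRF]
    simp [smul_eq_mul, mul_comm]
  have hRmul : ∀ n : ℕ, ∀ a : A, (Rl ^ (n + 1)) (F * a) =
      F * (Rl ^ (n + 1)) a + (((n : ℂ) + 1) * r) • (Rl ^ n) a := by
    intro n
    induction n with
    | zero => intro a; simpa using hbase a
    | succ n ih =>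
      intro a
      have h1 : (Rl ^ (n + 2)) (F * a) = Rl ((Rl ^ (n + 1)) (F * a)) := by
        rw [← Module.End.mul_apply, ← pow_succ']
      rw [h1, ih a, map_add, hbase ((Rl ^ (n+1)) a), map_smul]
      have h2 : Rl ((Rl ^ (n+1)) a) = (Rl ^ (n+2)) a := by
        rw [← Module.End.mul_apply, ← pow_succ']
      have h3 : Rl ((Rl ^ n) a) = (Rl ^ (n+1)) a := by
        rw [← Module.End.mul_apply, ← pow_succ']
      rw [h2, h3]
      push_cast
      module
  -- the ℂ-valued sums
  set T : ℤ → A → ℕ → ℂ :=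
    fun s a n => ((-1 : ℂ) ^ n / (n.factorial : ℂ)) * φ (L ((n : ℤ) + s) ((Rl ^ n) a))
    with hTdef
  set H : ℤ → A → ℂ := fun s a => ∑ᶠ n : ℕ, T s a n with hHdef
  have Hfin : ∀ (s : ℤ) (a : A) (M : ℕ), (∀ n, M ≤ n → (Rl ^ n) a = 0) →
      H s a = ∑ n ∈ Finset.range M, T s a n := by
    intro s a M hM
    refine finsum_eq_sum_of_support_subset _ ?_
    intro n hn
    simp only [Function.mem_support, hTdef] at hn
    simp only [Finset.coe_range, Set.mem_Iio]
    by_contra hc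
    push_neg at hc
    rw [hM n hc, map_zero, map_zero, mul_zero] at hn
    exact hn rfl
  -- relation between φ ∘ Lwt0 and H (-1)
  have hLwt0H : ∀ a : A, φ (Lwt0 a) = -(H (-1) a) := by
    intro a
    obtain ⟨M, hM⟩ := hstab a
    have hsub : Function.support
        (fun n : ℕ => ((-1 : ℂ) ^ (n + 1) / (n.factorial : ℂ)) •
          (L ((n : ℤ) - 1)) ((Rl ^ n) a)) ⊆ (Finset.range M : Finset ℕ) := by
      intro n hn
      simp only [Function.mem_support] at hn
      simp only [Finset.coe_range, Set.mem_Iio]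
      by_contra hc
      push_neg at hc
      rw [hM n hc, map_zero, smul_zero] at hn
      exact hn rfl
    rw [hLwt0 a, finsum_eq_sum_of_support_subset _ hsub, map_sum, Hfin (-1) a M hM,
      ← Finset.sum_neg_distrib]
    refine Finset.sum_congr rfl fun n _ => ?_
    simp only [hTdef, map_smul, smul_eq_mul]
    rw [show (n : ℤ) + (-1) = (n : ℤ) - 1 from by ring, pow_succ]
    ring
  -- shift lemma
  have hshift : ∀ s : ℤ, -1 ≤ s → (∀ a : A, H s a = 0) → ∀ a : A, H (s + 1) a = 0 := by
    intro s hs h a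
    obtain ⟨M, hM⟩ := hstab a
    have hM' : ∀ n, M + 1 ≤ n → (Rl ^ n) (F * a) = 0 := by
      intro n hn
      obtain ⟨m, rfl⟩ : ∃ m, n = m + 1 := ⟨n - 1, by omega⟩
      rw [hRmul m a, hM m (by omega), hM (m+1) (by omega)]
      simp
    have e3 := Hfin s (F * a) (M + 1) hM'
    rw [h (F * a)] at e3
    rw [Finset.sum_range_succ'] at e3
    have hT0 : T s (F * a) 0 = 0 := by
      simp only [hTdef, pow_zero, Nat.factorial_zero, Nat.cast_one, Nat.cast_zero,
        zero_add, Module.End.one_apply, one_div, inv_one, one_mul]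
      rw [hLF s hs a, hφF (L s a)]
    rw [hT0, add_zero] at e3
    have e4 : ∀ m ∈ Finset.range M, T s (F * a) (m + 1) = (-r) * T (s + 1) a m := by
      intro m hm
      simp only [hTdef]
      rw [hRmul m a, map_add, map_add, map_smul, map_smul]
      have hj : (-1 : ℤ) ≤ ((m : ℕ) + 1 : ℕ) + s := by
        push_cast; omega
      rw [hLF _ hj ((Rl ^ (m+1)) a), hφF, smul_eq_mul]
      have hidx : (((m : ℕ) + 1 : ℕ) : ℤ) + s = (m : ℤ) + (s + 1) := by push_cast; ring
      rw [hidx]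
      have hfac : ((m + 1).factorial : ℂ) = ((m : ℂ) + 1) * (m.factorial : ℂ) := by
        rw [Nat.factorial_succ]; push_cast; ring
      rw [hfac]
      have hm1 : ((m : ℂ) + 1) ≠ 0 := by
        have : ((m : ℂ) + 1) = ((m + 1 : ℕ) : ℂ) := by push_cast; ring
        rw [this]
        exact Nat.cast_ne_zero.mpr (by omega)
      have hmf : ((m).factorial : ℂ) ≠ 0 :=
        Nat.cast_ne_zero.mpr (Nat.factorial_ne_zero m)
      field_simp
      ring
    rw [Finset.sum_congr rfl e4, ← Finset.mul_sum] at e3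
    have e5 : ∑ m ∈ Finset.range M, T (s + 1) a m = 0 := by
      rcases mul_eq_zero.mp e3.symm with h1 | h1
      · exact absurd h1 (by simpa using hr)
      · exact h1
    rw [Hfin (s + 1) a M hM, e5]
  constructor
  · -- hard direction
    intro hwt
    -- H (-1) = 0
    have hHneg1 : ∀ a : A, H (-1) a = 0 := by
      intro a
      have h2 := hLwt0H a
      rw [hwt a] at h2
      exact neg_eq_zero.mp h2.symm
    -- H s = 0 for all s ≥ -1
    have hHall : ∀ m : ℕ, ∀ a : A, H (-1 + m) a = 0 := by
      intro m
      induction m with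
      | zero => simpa using hHneg1
      | succ m ih =>
        have := hshift (-1 + m) (by omega) ih
        intro a
        have hidx : (-1 : ℤ) + (m + 1 : ℕ) = (-1 + m) + 1 := by push_cast; ring
        rw [hidx]
        exact this a
    have hHs : ∀ s : ℤ, -1 ≤ s → ∀ a : A, H s a = 0 := by
      intro s hs a
      have : s = -1 + ((s + 1).toNat : ℤ) := by omega
      rw [this]
      exact hHall (s + 1).toNat a
    -- backward induction
    have down : ∀ m : ℕ, ∀ k : ℤ, N - m < k → -1 ≤ k → ∀ a : A, φ (L k a) = 0 := by
      intro m
      induction m with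
      | zero => intro k hk _ a; exact hN k (by omega) a
      | succ m ih =>
        intro k hk hk1 a
        have hIH : ∀ j : ℤ, k < j → ∀ b : A, φ (L j b) = 0 := by
          intro j hj b
          exact ih j (by omega) (by omega) b
        obtain ⟨M, hM⟩ := hstab a
        have hM' : ∀ n, M + 1 ≤ n → (Rl ^ n) a = 0 := fun n hn => hM n (by omega)
        have e1 := Hfin k a (M + 1) hM'
        rw [hHs k hk1 a] at e1
        rw [Finset.sum_range_succ'] at e1
        have e2 : ∀ n ∈ Finset.range M, T k a (n + 1) = 0 := by
          intro n hn
          simp only [hTdef]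
          rw [hIH (((n : ℕ) + 1 : ℕ) + k) (by push_cast; omega) _, mul_zero]
        rw [Finset.sum_congr rfl e2, Finset.sum_const_zero, zero_add] at e1
        simp only [hTdef, pow_zero, Nat.factorial_zero, Nat.cast_one, Nat.cast_zero,
          zero_add, Module.End.one_apply, one_div, inv_one, one_mul] at e1
        exact e1.symm
    intro k hk a
    have hm : N - ((N - k + 1).toNat : ℤ) < k := by omega
    exact down (N - k + 1).toNat k hm hk a
  · -- easy direction
    intro h a
    obtain ⟨M, hM⟩ := hstab a
    have := hLwt0H a
    rw [Hfin (-1) a M hM] at this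
    have hz : ∀ n ∈ Finset.range M, T (-1) a n = 0 := by
      intro n hn
      simp only [hTdef]
      rw [h ((n : ℤ) + (-1)) (by omega) _, mul_zero]
    rw [Finset.sum_congr rfl hz, Finset.sum_const_zero, neg_zero] at this
    exact this
end

section
/- Let A be a commutative ℂ-algebra, R : A → A a ℂ-linear derivation which is locally nilpotent, r ∈ ℂ with r ≠ 0, and (c_j)_{j ≥ 0} elements of A with c_0 = r·1 and R(c_{j+1}) = c_j for all j ≥ 0. For j ≥ −1 define the operator S_j : A → A by S_j(a) = −((j+1)!/r)·R(c_{j+1}·a). Then for every a ∈ A, ∑_{j ≥ −1} ((−1)^j/(j+1)!)·S_j(R^{j+1}(a)) = 0, the sum being finite by local nilpotence of R. -/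
/-- identity (2.3) in the proof of Proposition 2.16: for a commutative
ℂ-algebra `A`, a locally nilpotent derivation `R`, `r ≠ 0`, and elements `c_j` with
`c_0 = r·1` and `R(c_{j+1}) = c_j`, the operators
`S_j(a) = -((j+1)!/r)·R(c_{j+1}·a)` (for `j ≥ -1`) satisfy
`∑_{j ≥ -1} ((-1)^j/(j+1)!)·S_j(R^{j+1} a) = 0` (reindexed by `n = j + 1 : ℕ`). -/
theorem Sj_weight_zero_sum_vanishes
    (A : Type*) [CommRing A] [Algebra ℂ A]
    (R : Derivation ℂ A A)
    (hR : ∀ a : A, ∃ N : ℕ, (R.toLinearMap ^ N) a = 0)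
    (r : ℂ) (hr : r ≠ 0)
    (c : ℕ → A) (hc0 : c 0 = r • (1 : A))
    (hcR : ∀ j : ℕ, R (c (j + 1)) = c j)
    (S : ℤ → A → A)
    (hS : ∀ j : ℤ, -1 ≤ j → ∀ a : A,
      S j a = -((((j + 1).toNat.factorial : ℂ)) / r) • R (c (j + 1).toNat * a)) :
    ∀ a : A,
      ∑ᶠ n : ℕ, ((-1 : ℂ) ^ (n + 1) / (n.factorial : ℂ)) •
        S ((n : ℤ) - 1) ((R.toLinearMap ^ n) a) = 0 := by
  intro a
  obtain ⟨N, hN⟩ := hR a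
  set Rl := R.toLinearMap with hRl
  have hpow : ∀ m : ℕ, N ≤ m → (Rl ^ m) a = 0 := by
    intro m hm
    have h1 : Rl ^ m = Rl ^ (m - N) * Rl ^ N := by
      rw [← pow_add]; congr 1; omega
    rw [h1, Module.End.mul_apply, hN, map_zero]
  set u : ℕ → A := fun n =>
    ((-1 : ℂ) ^ (n + 1) / (n.factorial : ℂ)) • S ((n : ℤ) - 1) ((Rl ^ n) a) with hu
  set v : ℕ → A := fun n => ((-1 : ℂ) ^ n / r) • (c n * (Rl ^ (n + 1)) a) with hv
  have key : ∀ n : ℕ, u n = ((-1 : ℂ) ^ n / r) • (R (c n * (Rl ^ n) a)) := by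
    intro n
    have hj : ((n : ℤ) - 1 + 1) = (n : ℤ) := by ring
    rw [hu]
    simp only
    rw [hS ((n : ℤ) - 1) (by omega) _, hj, Int.toNat_natCast, smul_smul]
    congr 1
    have hfac : ((n.factorial : ℂ)) ≠ 0 := by
      exact_mod_cast Nat.factorial_ne_zero n
    field_simp
    ring
  have hRpow : ∀ n : ℕ, R ((Rl ^ n) a) = (Rl ^ (n + 1)) a := by
    intro n
    rw [pow_succ']
    rfl
  have hu0 : u 0 = v 0 := by
    rw [key 0, hv]
    have h0 : (Rl ^ 0) a = a := rfl
    have h1 : (Rl ^ (0 + 1)) a = R a := by rw [pow_one]; rfl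
    simp only [h0, h1, hc0, smul_mul_assoc, one_mul, Derivation.map_smul]
  have husucc : ∀ n : ℕ, u (n + 1) = v (n + 1) - v n := by
    intro n
    rw [key (n + 1), hv]
    simp only
    rw [R.leibniz, hcR n, hRpow (n + 1), smul_add]
    have h1 : ((-1 : ℂ) ^ (n + 1) / r) • ((Rl ^ (n + 1)) a * c n)
        = -(((-1 : ℂ) ^ n / r) • (c n * (Rl ^ (n + 1)) a)) := by
      rw [mul_comm, ← neg_smul]
      congr 1
      rw [pow_succ]
      ring
    simp only [smul_eq_mul] at h1 ⊢
    rw [h1]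
    abel
  have hsupp : Function.support u ⊆ (Finset.range (N + 1) : Finset ℕ) := by
    intro n hn
    simp only [Finset.coe_range, Set.mem_Iio]
    by_contra hnot
    apply hn
    rw [key n, hpow n (by omega), mul_zero, map_zero, smul_zero]
  rw [finsum_eq_sum_of_support_subset u hsupp]
  rw [Finset.sum_range_succ']
  have htel : ∀ i ∈ Finset.range N, u (i + 1) = v (i + 1) - v i := fun i _ => husucc i
  rw [Finset.sum_congr rfl htel, Finset.sum_range_sub v, hu0]
  have hvN : v N = 0 := by
    rw [hv]; simp only
    rw [hpow (N + 1) (by omega), mul_zero, smul_zero]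
  rw [hvN]
  abel
end

section
/- Let K be a field and V a finite-dimensional K-vector space equipped with a bilinear form χ : V × V → K which is nondegenerate (if χ(v,−) = 0 then v = 0, and if χ(−,v) = 0 then v = 0). Define a bilinear form on V ⊕ V by χ^pa_sym((v₁,v₂),(w₁,w₂)) = χ(v₂−v₁, w₂) + χ(w₂−w₁, v₂). Then χ^pa_sym is a symmetric nondegenerate bilinear form on V ⊕ V. -/
/-- Lemma 4.3: if `χ` is a nondegenerate bilinear form on a
finite-dimensional `K`-vector space `V`, then the bilinear form on `V ⊕ V` given by
`χ^pa_sym((v₁,v₂),(w₁,w₂)) = χ(v₂-v₁, w₂) + χ(w₂-w₁, v₂)` is symmetric and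
nondegenerate. -/
theorem pair_euler_symmetrization_nondegenerate
    (K : Type*) [Field K] (V : Type*) [AddCommGroup V] [Module K V]
    [FiniteDimensional K V]
    (χ : V →ₗ[K] V →ₗ[K] K)
    (hχ₁ : ∀ v : V, (∀ w : V, χ v w = 0) → v = 0)
    (hχ₂ : ∀ w : V, (∀ v : V, χ v w = 0) → w = 0)
    (Q : (V × V) →ₗ[K] (V × V) →ₗ[K] K)
    (hQ : ∀ p q : V × V, Q p q = χ (p.2 - p.1) q.2 + χ (q.2 - q.1) p.2) :
    (∀ p q : V × V, Q p q = Q q p) ∧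
    (∀ p : V × V, (∀ q : V × V, Q p q = 0) → p = 0) ∧
    (∀ q : V × V, (∀ p : V × V, Q p q = 0) → q = 0) := by
  have hsym : ∀ p q : V × V, Q p q = Q q p := by
    intro p q; rw [hQ, hQ]; ring
  refine ⟨hsym, ?_, ?_⟩
  · intro p hp
    have h2 : p.2 = 0 := by
      apply hχ₂
      intro w
      have := hp (w, 0)
      rw [hQ] at this
      simp only [zero_sub, map_neg, map_zero, LinearMap.neg_apply, zero_add,
        neg_eq_zero] at this
      exact this
    have h1 : p.1 = 0 := by
      have := hχ₁ (p.2 - p.1) (fun w => by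
        have := hp (0, w)
        rw [hQ] at this
        simp only [h2] at this ⊢
        simpa using this)
      rw [h2, zero_sub, neg_eq_zero] at this
      exact this
    exact Prod.ext h1 h2
  · intro q hq
    have hq' : ∀ p : V × V, Q q p = 0 := fun p => (hsym q p).symm ▸ hq p
    have h2 : q.2 = 0 := by
      apply hχ₂
      intro w
      have := hq' (w, 0)
      rw [hQ] at this
      simp only [zero_sub, map_neg, map_zero, LinearMap.neg_apply, zero_add,
        neg_eq_zero] at this
      exact this
    have h1 : q.1 = 0 := by
      have := hχ₁ (q.2 - q.1) (fun w => by
        have := hq' (0, w)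
        rw [hQ] at this
        simp only [h2] at this ⊢
        simpa using this)
      rw [h2, zero_sub, neg_eq_zero] at this
      exact this
    exact Prod.ext h1 h2
end
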